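/- For 0 < λ < 1, the integral ∫_0^{π/2} log(1 − λ cos²φ)/√(1 − λ cos²φ) dφ equals (K(√λ)/2)·log(1−λ), where K(k) = ∫_0^{π/2} (1 − k² sin²θ)^{-1/2} dθ. -/

import Mathlib

open Real

open Set intervalIntegral in
lemma Dpos (l : ℝ) (h₁ : l < 1) (h0 : 0 ≤ l) (θ : ℝ) : 0 < 1 - l * Real.sin θ ^ 2 := by
  nlinarith [Real.sin_sq_le_one θ]

lemma deriv_g (l : ℝ) (h₀ : 0 < l) (h₁ : l < 1) {x : ℝ} (hx : x ∈ Set.Ioo (0:ℝ) (π/2)) :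
    HasDerivAt (fun θ => arcsin (Real.cos θ / Real.sqrt (1 - l * Real.sin θ ^ 2)))
      (-(Real.sqrt (1 - l)) / (1 - l * Real.sin x ^ 2)) x := by
  obtain ⟨hx0, hx2⟩ := hx
  have hs : 0 < Real.sin x := Real.sin_pos_of_pos_of_lt_pi hx0 (by linarith [pi_pos.le, hx2, pi_gt_three])
  have hc : 0 < Real.cos x := Real.cos_pos_of_mem_Ioo ⟨by linarith [pi_pos], hx2⟩
  have hD : 0 < 1 - l * Real.sin x ^ 2 := Dpos l h₁ h₀.le x
  have hl1 : (0:ℝ) < 1 - l := by linarith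
  set D := 1 - l * Real.sin x ^ 2 with hDdef
  have hsD : 0 < Real.sqrt D := Real.sqrt_pos.mpr hD
  have hsq : Real.sqrt D ^ 2 = D := Real.sq_sqrt hD.le
  have hpyth := Real.sin_sq_add_cos_sq x
  have hD' : HasDerivAt (fun θ => 1 - l * Real.sin θ ^ 2) (-(l * (2 * Real.sin x * Real.cos x))) x := by
    have h1 : HasDerivAt (fun θ => Real.sin θ ^ 2) (2 * Real.sin x * Real.cos x) x := by
      simpa [mul_comm] using (Real.hasDerivAt_sin x).fun_pow 2
    simpa using ((h1.const_mul l).const_sub 1)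
  have hsqrt : HasDerivAt (fun θ => Real.sqrt (1 - l * Real.sin θ ^ 2))
      (-(l * (2 * Real.sin x * Real.cos x)) / (2 * Real.sqrt D)) x := hD'.sqrt hD.ne'
  have hinner : HasDerivAt (fun θ => Real.cos θ / Real.sqrt (1 - l * Real.sin θ ^ 2))
      ((-Real.sin x * Real.sqrt D - Real.cos x * (-(l * (2 * Real.sin x * Real.cos x)) / (2 * Real.sqrt D))) / (Real.sqrt D) ^ 2) x :=
    (Real.hasDerivAt_cos x).div hsqrt hsD.ne'
  have hclt : Real.cos x ^ 2 < D := by nlinarith [mul_pos (mul_pos hl1 hs) hs]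
  have hu1 : Real.cos x / Real.sqrt D < 1 := by
    rw [div_lt_one hsD]
    calc Real.cos x = Real.sqrt (Real.cos x ^ 2) := (Real.sqrt_sq hc.le).symm
      _ < Real.sqrt D := Real.sqrt_lt_sqrt (sq_nonneg _) hclt
  have hu0 : 0 < Real.cos x / Real.sqrt D := div_pos hc hsD
  have harcsin := Real.hasDerivAt_arcsin (by linarith : Real.cos x / Real.sqrt D ≠ -1)
    (ne_of_lt hu1)
  have hcomp := harcsin.comp x hinner
  refine hcomp.congr_deriv (Eq.symm ?_)
  have h1u : 1 - (Real.cos x / Real.sqrt D) ^ 2 = (1 - l) * Real.sin x ^ 2 / D := by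
    field_simp
    nlinarith [hsq]
  rw [h1u]
  have hsqrtdiv : Real.sqrt ((1 - l) * Real.sin x ^ 2 / D)
      = Real.sqrt (1 - l) * Real.sin x / Real.sqrt D := by
    rw [Real.sqrt_div (by positivity), Real.sqrt_mul hl1.le, Real.sqrt_sq hs.le]
  rw [hsqrtdiv]
  have hsl : Real.sqrt (1 - l) > 0 := Real.sqrt_pos.mpr hl1
  have hsl2 : Real.sqrt (1 - l) ^ 2 = 1 - l := Real.sq_sqrt hl1.le
  field_simp
  linear_combination (-2*Real.sin x*D*Real.sqrt D)*hsl2 + (2*Real.sin x*D*Real.sqrt D)*hsq + (-2*l*Real.sin x*D*Real.sqrt D)*hpyth + (2*Real.sin x*D*Real.sqrt D)*hDdef + (2*Real.sqrt D*Real.sin x*(1 - l*Real.sin x^2) - Real.sqrt D^2)*hsl2 + (-2*Real.sqrt D*Real.sin x*(1 - l*Real.sin x^2) + (1 - l*Real.sin x^2) - (1-l))*hsq + (2*Real.sqrt D*Real.sin x*l*(1 - l*Real.sin x^2) - l*(1 - l*Real.sin x^2))*hpyth + (-2*Real.sqrt D*Real.sin x*(1 - l*Real.sin x^2) + (1 -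 l*Real.sin x^2) - 1 + l)*hDdef

/-- The complete elliptic integral of the first kind. -/
noncomputable def K (k : ℝ) : ℝ := ∫ θ in (0:ℝ)..(π/2), 1 / Real.sqrt (1 - k^2 * Real.sin θ ^ 2)

open Set intervalIntegral in
theorem stmt_11 (l : ℝ) (h₀ : 0 < l) (h₁ : l < 1) :
    ∫ φ in (0:ℝ)..(π/2),
        Real.log (1 - l * Real.cos φ ^ 2) / Real.sqrt (1 - l * Real.cos φ ^ 2) =
      (K (Real.sqrt l) / 2) * Real.log (1 - l) := by
  have hl1 : (0:ℝ) < 1 - l := by linarith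
  have hDpos : ∀ θ, 0 < 1 - l * Real.sin θ ^ 2 := Dpos l h₁ h₀.le
  have hsDpos : ∀ θ, 0 < Real.sqrt (1 - l * Real.sin θ ^ 2) :=
    fun θ => Real.sqrt_pos.mpr (hDpos θ)
  have hDcont : Continuous (fun θ : ℝ => 1 - l * Real.sin θ ^ 2) := by continuity
  have hsDcont : Continuous (fun θ : ℝ => Real.sqrt (1 - l * Real.sin θ ^ 2)) :=
    Real.continuous_sqrt.comp hDcont
  set G : ℝ → ℝ := fun u => Real.log (1 - l * Real.sin u ^ 2) / Real.sqrt (1 - l * Real.sin u ^ 2) with hGdef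
  have hGcont : Continuous G := by
    apply Continuous.div _ hsDcont (fun x => (hsDpos x).ne')
    exact hDcont.log (fun x => (hDpos x).ne')
  have hpi2 : (0:ℝ) ≤ π/2 := by positivity
  -- Step 1 : rewrite the cos² integral as the sin² integral
  have step1 : (∫ φ in (0:ℝ)..(π/2),
        Real.log (1 - l * Real.cos φ ^ 2) / Real.sqrt (1 - l * Real.cos φ ^ 2))
      = ∫ θ in (0:ℝ)..(π/2), G θ := by
    have h := intervalIntegral.integral_comp_sub_left (a := (0:ℝ)) (b := π/2) G (π/2)
    simp only [sub_self, sub_zero] at h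
    rw [← h]
    apply intervalIntegral.integral_congr
    intro x _
    simp [hGdef, Real.sin_pi_div_two_sub]
  -- the substitution function
  set g : ℝ → ℝ := fun θ => arcsin (Real.cos θ / Real.sqrt (1 - l * Real.sin θ ^ 2)) with hgdef
  have hgcont : Continuous g :=
    Real.continuous_arcsin.comp (Real.continuous_cos.div hsDcont (fun x => (hsDpos x).ne'))
  have hg0 : g 0 = π/2 := by simp [hgdef]
  have hg2 : g (π/2) = 0 := by simp [hgdef]
  have key : (∫ θ in (0:ℝ)..(π/2),
        (-(Real.sqrt (1-l)) / (1 - l * Real.sin θ ^ 2)) • (G ∘ g) θ)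
      = ∫ u in (g 0)..(g (π/2)), G u := by
    apply intervalIntegral.integral_comp_smul_deriv'' hgcont.continuousOn
    · intro x hx
      rw [min_eq_left hpi2, max_eq_right hpi2] at hx
      exact (deriv_g l h₀ h₁ hx).hasDerivWithinAt
    · exact (Continuous.div continuous_const hDcont (fun x => (hDpos x).ne')).continuousOn
    · exact hGcont.continuousOn
  rw [hg0, hg2, intervalIntegral.integral_symm 0 (π/2)] at key
  -- pointwise simplification of the substituted integrand
  have hpt : ∀ θ ∈ Set.uIcc (0:ℝ) (π/2),
      (-(Real.sqrt (1-l)) / (1 - l * Real.sin θ ^ 2)) • (G ∘ g) θ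
        = G θ - Real.log (1-l) * (1 / Real.sqrt (1 - l * Real.sin θ ^ 2)) := by
    intro θ hθ
    rw [Set.uIcc_of_le hpi2] at hθ
    have hcn : 0 ≤ Real.cos θ :=
      Real.cos_nonneg_of_mem_Icc ⟨by linarith [hθ.1, pi_pos], hθ.2⟩
    have hD := hDpos θ
    have hsD := hsDpos θ
    set D := 1 - l * Real.sin θ ^ 2 with hDdef
    have hsq : Real.sqrt D ^ 2 = D := Real.sq_sqrt hD.le
    have hpyth := Real.sin_sq_add_cos_sq θ
    have hle : Real.cos θ / Real.sqrt D ≤ 1 := by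
      rw [div_le_one hsD, ← Real.sqrt_sq hcn]
      apply Real.sqrt_le_sqrt
      nlinarith [sq_nonneg (Real.sin θ)]
    have hge : -1 ≤ Real.cos θ / Real.sqrt D := le_trans (by norm_num) (div_nonneg hcn hsD.le)
    have hsin : Real.sin (g θ) = Real.cos θ / Real.sqrt D := by
      rw [hgdef]; exact Real.sin_arcsin hge hle
    have hDg : 1 - l * Real.sin (g θ) ^ 2 = (1 - l) / D := by
      rw [hsin, div_pow, hsq]
      field_simp
      linear_combination (-l) * hpyth
    have hsl : 0 < Real.sqrt (1 - l) := Real.sqrt_pos.mpr hl1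
    have hsl2 : Real.sqrt (1-l) ^ 2 = 1 - l := Real.sq_sqrt hl1.le
    have hGg : G (g θ) = (Real.log (1-l) - Real.log D) * (Real.sqrt D / Real.sqrt (1-l)) := by
      simp only [hGdef]
      rw [hDg, Real.sqrt_div hl1.le, Real.log_div hl1.ne' hD.ne']
      field_simp
    simp only [Function.comp_apply, smul_eq_mul]
    rw [hGg]
    simp only [hGdef, ← hDdef]
    field_simp
    linear_combination (Real.sqrt (1-l) * (Real.log (1 - l*Real.sin θ^2) - Real.log (1-l))) * hsq - (Real.log (1-l) - Real.log D) * (1 - Real.sqrt (1-l)) * hsq - (Real.log (1-l) - Real.log D) * (1 - Real.sqrt (1-l)) * hDdef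
  have key2 : (∫ θ in (0:ℝ)..(π/2),
      (G θ - Real.log (1-l) * (1 / Real.sqrt (1 - l * Real.sin θ ^ 2))))
      = -∫ θ in (0:ℝ)..(π/2), G θ := by
    rw [← intervalIntegral.integral_congr hpt]; exact key
  have hI1 : IntervalIntegrable G MeasureTheory.volume 0 (π/2) := hGcont.intervalIntegrable _ _
  have hI2 : IntervalIntegrable
      (fun θ => Real.log (1-l) * (1 / Real.sqrt (1 - l * Real.sin θ ^ 2)))
      MeasureTheory.volume 0 (π/2) :=
    (continuous_const.mul (continuous_const.div hsDcont (fun x => (hsDpos x).ne'))).intervalIntegrable _ _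
  rw [intervalIntegral.integral_sub hI1 hI2, intervalIntegral.integral_const_mul] at key2
  have hK : K (Real.sqrt l) = ∫ θ in (0:ℝ)..(π/2), 1 / Real.sqrt (1 - l * Real.sin θ ^ 2) := by
    unfold K
    simp [Real.sq_sqrt h₀.le]
  rw [step1, hK]
  linear_combination (1/2 : ℝ) * key2
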